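/- (Distance of bipartite Tanner codes) Let $G=(L,R,E)$ be an $(n,d,\lambda)$-expander, and let ${\mathcal C}_1, {\mathcal C}_2 \subseteq \Sigma^d$ be codes of distance $\delta_L$ and $\delta_R$ respectively. Define the Tanner code ${\mathcal C}_{\mathrm{Tan}} = \{h \in \Sigma^E : h_\ell \in {\mathcal C}_1 \text{ for all } \ell \in L, \ h_r \in {\mathcal C}_2 \text{ for all } r \in R\}$. Then any two distinct codewords of ${\mathcal C}_{\mathrm{Tan}}$ differ on at least a $\sqrt{\delta_L \delta_R}(\sqrt{\delta_L\delta_R} - \lambda)$ fraction of the edges; in particular the distance is at least $\delta_L \delta_R - \lambda$. -/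

import Mathlib

open Finset

open scoped Classical

/-- Number of edges of the (sub)graph `P` between `S` and `T`. -/
noncomputable def eCount {L R : Type*} (P : L → R → Prop) (S : Finset L) (T : Finset R) : ℕ :=
  ((S ×ˢ T).filter fun p => P p.1 p.2).card

set_option maxHeartbeats 2000000 in
/-- Distance of bipartite Tanner codes: if `G` is an `(n,d,λ)`-expander (with fixed orderings
`ordL`, `ordR` of the edges at each vertex, and satisfying the strong expander mixing lemma)
and `C₁, C₂ ⊆ Σ^d` are codes of distance `δL`, `δR`, then any two Tanner codewords `h₁ ≠ h₂`
(edge labelings whose local views lie in `C₁` on the left and `C₂` on the right) differ on at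
least a `√(δLδR)(√(δLδR) - λ)` fraction of the `n·d` edges; in particular on at least a
`δLδR - λ` fraction. -/
theorem tanner_distance {L R A : Type*} [Fintype L] [Fintype R]
    (n d : ℕ) (hL : Fintype.card L = n) (hR : Fintype.card R = n)
    (G : L → R → Prop)
    (ordL : ∀ ℓ : L, Fin d ≃ {r : R // G ℓ r})
    (ordR : ∀ r : R, Fin d ≃ {ℓ : L // G ℓ r})
    (lam δL δR : ℝ) (hlam : 0 ≤ lam)
    (hδL0 : 0 < δL) (hδL1 : δL ≤ 1) (hδR0 : 0 < δR) (hδR1 : δR ≤ 1)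
    (hEML : ∀ (S : Finset L) (T : Finset R),
      |(eCount G S T : ℝ) - ((d : ℝ) / n) * S.card * T.card| ≤
        lam * d * Real.sqrt ((S.card : ℝ) * T.card))
    (C₁ C₂ : Set (Fin d → A))
    (hC₁ : ∀ c ∈ C₁, ∀ c' ∈ C₁, c ≠ c' →
      δL * d ≤ ((Finset.univ.filter fun k : Fin d => c k ≠ c' k).card : ℝ))
    (hC₂ : ∀ c ∈ C₂, ∀ c' ∈ C₂, c ≠ c' →
      δR * d ≤ ((Finset.univ.filter fun k : Fin d => c k ≠ c' k).card : ℝ))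
    (h₁ h₂ : L → R → A)
    (h₁L : ∀ ℓ : L, (fun k => h₁ ℓ (ordL ℓ k).1) ∈ C₁)
    (h₁R : ∀ r : R, (fun k => h₁ (ordR r k).1 r) ∈ C₂)
    (h₂L : ∀ ℓ : L, (fun k => h₂ ℓ (ordL ℓ k).1) ∈ C₁)
    (h₂R : ∀ r : R, (fun k => h₂ (ordR r k).1 r) ∈ C₂)
    (hne : ∃ ℓ r, G ℓ r ∧ h₁ ℓ r ≠ h₂ ℓ r) :
    Real.sqrt (δL * δR) * (Real.sqrt (δL * δR) - lam) * (n * d) ≤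
        (eCount (fun ℓ r => G ℓ r ∧ h₁ ℓ r ≠ h₂ ℓ r) Finset.univ Finset.univ : ℝ) ∧
      (δL * δR - lam) * (n * d) ≤
        (eCount (fun ℓ r => G ℓ r ∧ h₁ ℓ r ≠ h₂ ℓ r) Finset.univ Finset.univ : ℝ) := by
  obtain ⟨ℓ₀, r₀, hGe, hne0⟩ := hne
  have hd : 0 < d := Fin.pos_iff_nonempty.mpr ⟨(ordL ℓ₀).symm ⟨r₀, hGe⟩⟩
  have hn : 0 < n := hL ▸ Fintype.card_pos_iff.mpr ⟨ℓ₀⟩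
  set S : Finset L := univ.filter (fun ℓ => ∃ r, G ℓ r ∧ h₁ ℓ r ≠ h₂ ℓ r) with hSdef
  set T : Finset R := univ.filter (fun r => ∃ ℓ, G ℓ r ∧ h₁ ℓ r ≠ h₂ ℓ r) with hTdef
  set F : Finset (L × R) := (univ ×ˢ univ).filter
      (fun p => G p.1 p.2 ∧ h₁ p.1 p.2 ≠ h₂ p.1 p.2) with hFdef
  have hgoalF : (eCount (fun ℓ r => G ℓ r ∧ h₁ ℓ r ≠ h₂ ℓ r) Finset.univ Finset.univ : ℝ)
      = (F.card : ℝ) := by rw [hFdef]; unfold eCount; congr!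
  -- fiberwise counts
  have hfiberL : ∀ ℓ : L, (F.filter fun p => p.1 = ℓ).card
      = (univ.filter fun r => G ℓ r ∧ h₁ ℓ r ≠ h₂ ℓ r).card := by
    intro ℓ
    refine Finset.card_nbij' (fun p => p.2) (fun r => (ℓ, r)) ?_ ?_ ?_ ?_
    · intro p hp
      simp only [mem_coe, hFdef, mem_filter, mem_product, mem_univ, true_and] at hp
      obtain ⟨⟨hG', hne'⟩, hfst⟩ := hp
      subst hfst
      simp only [mem_coe, mem_filter, mem_univ, true_and]
      exact ⟨hG', hne'⟩
    · intro r hr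
      simp only [mem_coe, mem_filter, mem_univ, true_and] at hr
      simp only [mem_coe, hFdef, mem_filter, mem_product, mem_univ, true_and]
      exact ⟨hr, trivial⟩
    · intro p hp
      simp only [mem_coe, mem_filter] at hp
      obtain ⟨pl, pr⟩ := p
      obtain ⟨-, h⟩ := hp
      simp only at h
      simp [h]
    · intro r _
      rfl
  have hfiberR : ∀ r : R, (F.filter fun p => p.2 = r).card
      = (univ.filter fun ℓ => G ℓ r ∧ h₁ ℓ r ≠ h₂ ℓ r).card := by
    intro r
    refine Finset.card_nbij' (fun p => p.1) (fun ℓ => (ℓ, r)) ?_ ?_ ?_ ?_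
    · intro p hp
      simp only [mem_coe, hFdef, mem_filter, mem_product, mem_univ, true_and] at hp
      obtain ⟨⟨hG', hne'⟩, hsnd⟩ := hp
      subst hsnd
      simp only [mem_coe, mem_filter, mem_univ, true_and]
      exact ⟨hG', hne'⟩
    · intro ℓ hℓ
      simp only [mem_coe, mem_filter, mem_univ, true_and] at hℓ
      simp only [mem_coe, hFdef, mem_filter, mem_product, mem_univ, true_and]
      exact ⟨hℓ, trivial⟩
    · intro p hp
      simp only [mem_coe, mem_filter] at hp
      obtain ⟨pl, pr⟩ := p
      obtain ⟨-, h⟩ := hp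
      simp only at h
      simp [h]
    · intro ℓ _
      rfl
  have hFsumL : F.card = ∑ ℓ : L, (univ.filter fun r => G ℓ r ∧ h₁ ℓ r ≠ h₂ ℓ r).card := by
    rw [Finset.card_eq_sum_card_fiberwise (f := fun p : L × R => p.1) (t := univ)
      (fun x _ => mem_univ _)]
    exact Finset.sum_congr rfl fun ℓ _ => hfiberL ℓ
  have hFsumR : F.card = ∑ r : R, (univ.filter fun ℓ => G ℓ r ∧ h₁ ℓ r ≠ h₂ ℓ r).card := by
    rw [Finset.card_eq_sum_card_fiberwise (f := fun p : L × R => p.2) (t := univ)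
      (fun x _ => mem_univ _)]
    exact Finset.sum_congr rfl fun r _ => hfiberR r
  -- local lower bounds
  have hlocL : ∀ ℓ ∈ S, δL * d ≤ ((univ.filter fun r => G ℓ r ∧ h₁ ℓ r ≠ h₂ ℓ r).card : ℝ) := by
    intro ℓ hℓ
    simp only [hSdef, mem_filter, mem_univ, true_and] at hℓ
    obtain ⟨r, hGr, hner⟩ := hℓ
    have hcc : (fun k => h₁ ℓ (ordL ℓ k).1) ≠ (fun k => h₂ ℓ (ordL ℓ k).1) := by
      intro h
      apply hner
      have := congrFun h ((ordL ℓ).symm ⟨r, hGr⟩)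
      simpa using this
    refine (hC₁ _ (h₁L ℓ) _ (h₂L ℓ) hcc).trans ?_
    have hcard : (univ.filter fun k : Fin d => h₁ ℓ (ordL ℓ k).1 ≠ h₂ ℓ (ordL ℓ k).1).card
        ≤ (univ.filter fun r => G ℓ r ∧ h₁ ℓ r ≠ h₂ ℓ r).card := by
      apply Finset.card_le_card_of_injOn (fun k => (ordL ℓ k).1)
      · intro k hk
        simp only [mem_coe, mem_filter, mem_univ, true_and] at hk ⊢
        exact ⟨(ordL ℓ k).2, hk⟩
      · intro k _ k' _ hkk
        exact (ordL ℓ).injective (Subtype.ext hkk)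
    exact_mod_cast hcard
  have hlocR : ∀ r ∈ T, δR * d ≤ ((univ.filter fun ℓ => G ℓ r ∧ h₁ ℓ r ≠ h₂ ℓ r).card : ℝ) := by
    intro r hr
    simp only [hTdef, mem_filter, mem_univ, true_and] at hr
    obtain ⟨ℓ, hGr, hner⟩ := hr
    have hcc : (fun k => h₁ (ordR r k).1 r) ≠ (fun k => h₂ (ordR r k).1 r) := by
      intro h
      apply hner
      have := congrFun h ((ordR r).symm ⟨ℓ, hGr⟩)
      simpa using this
    refine (hC₂ _ (h₁R r) _ (h₂R r) hcc).trans ?_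
    have hcard : (univ.filter fun k : Fin d => h₁ (ordR r k).1 r ≠ h₂ (ordR r k).1 r).card
        ≤ (univ.filter fun ℓ => G ℓ r ∧ h₁ ℓ r ≠ h₂ ℓ r).card := by
      apply Finset.card_le_card_of_injOn (fun k => (ordR r k).1)
      · intro k hk
        simp only [mem_coe, mem_filter, mem_univ, true_and] at hk ⊢
        exact ⟨(ordR r k).2, hk⟩
      · intro k _ k' _ hkk
        exact (ordR r).injective (Subtype.ext hkk)
    exact_mod_cast hcard
  -- global lower bounds
  have hleft : δL * d * S.card ≤ (F.card : ℝ) := by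
    have : (F.card : ℝ) = ∑ ℓ : L, ((univ.filter fun r => G ℓ r ∧ h₁ ℓ r ≠ h₂ ℓ r).card : ℝ) := by
      rw [hFsumL]; push_cast; ring
    rw [this]
    calc δL * d * S.card = ∑ _ℓ ∈ S, δL * d := by
          rw [Finset.sum_const, nsmul_eq_mul]; ring
      _ ≤ ∑ ℓ ∈ S, ((univ.filter fun r => G ℓ r ∧ h₁ ℓ r ≠ h₂ ℓ r).card : ℝ) :=
          Finset.sum_le_sum hlocL
      _ ≤ ∑ ℓ : L, ((univ.filter fun r => G ℓ r ∧ h₁ ℓ r ≠ h₂ ℓ r).card : ℝ) :=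
          Finset.sum_le_sum_of_subset_of_nonneg (Finset.subset_univ S)
            (fun _ _ _ => by positivity)
  have hright : δR * d * T.card ≤ (F.card : ℝ) := by
    have : (F.card : ℝ) = ∑ r : R, ((univ.filter fun ℓ => G ℓ r ∧ h₁ ℓ r ≠ h₂ ℓ r).card : ℝ) := by
      rw [hFsumR]; push_cast; ring
    rw [this]
    calc δR * d * T.card = ∑ _r ∈ T, δR * d := by
          rw [Finset.sum_const, nsmul_eq_mul]; ring
      _ ≤ ∑ r ∈ T, ((univ.filter fun ℓ => G ℓ r ∧ h₁ ℓ r ≠ h₂ ℓ r).card : ℝ) :=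
          Finset.sum_le_sum hlocR
      _ ≤ ∑ r : R, ((univ.filter fun ℓ => G ℓ r ∧ h₁ ℓ r ≠ h₂ ℓ r).card : ℝ) :=
          Finset.sum_le_sum_of_subset_of_nonneg (Finset.subset_univ T)
            (fun _ _ _ => by positivity)
  -- F is within S × T
  have hFsub : F ⊆ (S ×ˢ T).filter fun p => G p.1 p.2 := by
    intro p hp
    simp only [hFdef, mem_filter, mem_product, mem_univ, true_and] at hp
    simp only [mem_filter, mem_product, hSdef, hTdef, mem_filter, mem_univ, true_and]
    exact ⟨⟨⟨p.2, hp⟩, ⟨p.1, hp⟩⟩, hp.1⟩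
  have hFle : (F.card : ℝ) ≤ (eCount G S T : ℝ) := by
    exact_mod_cast Finset.card_le_card hFsub
  have hEML' := hEML S T
  have hup : (F.card : ℝ) ≤ ((d : ℝ) / n) * S.card * T.card
      + lam * d * Real.sqrt ((S.card : ℝ) * T.card) := by
    have := abs_le.mp hEML'
    linarith [this.2]
  -- real arithmetic
  set a : ℝ := (S.card : ℝ) with hadef
  set b : ℝ := (T.card : ℝ) with hbdef
  set f : ℝ := (F.card : ℝ) with hfdef
  have ha1 : 1 ≤ a := by
    have : ℓ₀ ∈ S := by
      simp only [hSdef, mem_filter, mem_univ, true_and]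
      exact ⟨r₀, hGe, hne0⟩
    have := Finset.card_pos.mpr ⟨ℓ₀, this⟩
    rw [hadef]; exact_mod_cast this
  have hb1 : 1 ≤ b := by
    have : r₀ ∈ T := by
      simp only [hTdef, mem_filter, mem_univ, true_and]
      exact ⟨ℓ₀, hGe, hne0⟩
    have := Finset.card_pos.mpr ⟨r₀, this⟩
    rw [hbdef]; exact_mod_cast this
  have hf0 : 0 ≤ f := by rw [hfdef]; positivity
  have hd0 : (0:ℝ) < d := by exact_mod_cast hd
  have hn0 : (0:ℝ) < n := by exact_mod_cast hn
  set x : ℝ := Real.sqrt (a * b) with hxdef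
  have hx2 : x ^ 2 = a * b := Real.sq_sqrt (by nlinarith)
  have hx1 : 1 ≤ x := by
    rw [hxdef]
    rw [show (1:ℝ) = Real.sqrt 1 by simp]
    exact Real.sqrt_le_sqrt (by nlinarith)
  set sp : ℝ := Real.sqrt (δL * δR) with hspdef
  have hsp2 : sp ^ 2 = δL * δR := Real.sq_sqrt (by positivity)
  have hsp0 : 0 < sp := Real.sqrt_pos.mpr (by positivity)
  have hsp1 : sp ≤ 1 := by
    rw [hspdef]
    rw [show (1:ℝ) = Real.sqrt 1 by simp]
    exact Real.sqrt_le_sqrt (by nlinarith)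
  rw [hgoalF]
  have hmain : sp * (sp - lam) * (n * d) ≤ f := by
    rcases le_or_gt sp lam with hcase | hcase
    · have h1 : sp * (sp - lam) ≤ 0 := mul_nonpos_of_nonneg_of_nonpos hsp0.le (by linarith)
      have hnd : (0:ℝ) ≤ (n:ℝ) * d := by positivity
      nlinarith [mul_le_mul_of_nonneg_right h1 hnd]
    · -- p d² a b ≤ f²
      have hprod : (δL * δR) * d ^ 2 * (a * b) ≤ f ^ 2 := by
        have h1 := hleft
        have h2 := hright
        nlinarith [mul_le_mul hleft hright (by positivity) hf0]
      have hfx : sp * d * x ≤ f := by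
        have hsq : (sp * d * x) ^ 2 ≤ f ^ 2 := by
          have : (sp * d * x) ^ 2 = (δL * δR) * d ^ 2 * (a * b) := by
            rw [mul_pow, mul_pow, hsp2, hx2]
          rw [this]; exact hprod
        nlinarith [mul_pos (mul_pos hsp0 hd0) (lt_of_lt_of_le one_pos hx1)]
      have hup' : f ≤ ((d : ℝ) / n) * x ^ 2 + lam * d * x := by
        rw [hx2]; calc f ≤ ((d:ℝ)/n) * a * b + lam * d * x := hup
          _ = ((d:ℝ)/n) * (a*b) + lam * d * x := by ring
      have hnx : n * (sp - lam) ≤ x := by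
        have hdx : 0 < d * x := by nlinarith
        have key : n * (sp * d * x) ≤ d * x ^ 2 + n * (lam * d * x) := by
          have hdiv : n * (((d:ℝ)/n) * x ^ 2) = d * x ^ 2 := by
            field_simp
          nlinarith [mul_le_mul_of_nonneg_left (hfx.trans hup') hn0.le]
        nlinarith [key]
      calc sp * (sp - lam) * (n * d) = sp * d * (n * (sp - lam)) := by ring
        _ ≤ sp * d * x := by
            apply mul_le_mul_of_nonneg_left hnx (by positivity)
        _ ≤ f := hfx
  constructor
  · exact hmain
  · refine le_trans ?_ hmain
    have : δL * δR - lam ≤ sp * (sp - lam) := by nlinarith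
    have hnd : (0:ℝ) ≤ n * d := by positivity
    nlinarith
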